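/- If the system is globally hypoelliptic at the Fourier coefficient level, then for every ε > 0 there exists C > 0 such that ‖σ(τ,j)‖ ≥ C·exp(−ε·w(τ,j)) for all (τ,j) ∈ ℤ^m×ℕ with ‖σ(τ,j)‖ ≠ 0. -/

import Mathlib

open Real

/-- Euclidean norm of an integer vector `τ ∈ ℤ^m`. -/
noncomputable def eNormZ {m : ℕ} (τ : Fin m → ℤ) : ℝ :=
  Real.sqrt (∑ i, ((τ i : ℝ)) ^ 2)

/-- The weight `w(τ,j) = ‖τ‖^(1/σ) + j^(1/(2nμ))`. -/
noncomputable def wgt (m n : ℕ) (σ μ : ℝ) (τ : Fin m → ℤ) (j : ℕ) : ℝ :=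
  eNormZ τ ^ (1 / σ) + (j : ℝ) ^ (1 / (2 * n * μ))

/-- GS-decay: `|a(τ,j)| ≤ C exp(-ε w(τ,j))` for some `C, ε > 0`. -/
def GSDecay (m n : ℕ) (σ μ : ℝ) (a : (Fin m → ℤ) → ℕ → ℂ) : Prop :=
  ∃ C > 0, ∃ ε > 0, ∀ τ j, ‖a τ j‖ ≤ C * Real.exp (-ε * wgt m n σ μ τ j)

/-- GS-growth: for all `ε > 0` there is `C > 0` with `|a(τ,j)| ≤ C exp(ε w(τ,j))`. -/
def GSGrowth (m n : ℕ) (σ μ : ℝ) (a : (Fin m → ℤ) → ℕ → ℂ) : Prop :=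
  ∀ ε > 0, ∃ C > 0, ∀ τ j, ‖a τ j‖ ≤ C * Real.exp (ε * wgt m n σ μ τ j)

/-- Symbol of the operator `L_r = Q_r(D_t) + d_r P(x,D_x)`: `σ_r(τ,j) = Q_r(τ) + d_r λ_j`. -/
noncomputable def symb {m ℓ : ℕ} (Q : Fin ℓ → MvPolynomial (Fin m) ℂ)
    (d : Fin ℓ → ℂ) (lam : ℕ → ℝ) (r : Fin ℓ) (τ : Fin m → ℤ) (j : ℕ) : ℂ :=
  MvPolynomial.eval (fun i => ((τ i : ℂ))) (Q r) + d r * (lam j : ℂ)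

/-- `‖σ(τ,j)‖ = max_{1 ≤ r ≤ ℓ} |σ_r(τ,j)|`. -/
noncomputable def symbNorm {m ℓ : ℕ} (Q : Fin ℓ → MvPolynomial (Fin m) ℂ)
    (d : Fin ℓ → ℂ) (lam : ℕ → ℝ) (τ : Fin m → ℤ) (j : ℕ) : ℝ :=
  ⨆ r : Fin ℓ, ‖symb Q d lam r τ j‖

/-- The Diophantine condition (DC). -/
def DioCond (m n ℓ : ℕ) (σ μ : ℝ) (Q : Fin ℓ → MvPolynomial (Fin m) ℂ)
    (d : Fin ℓ → ℂ) (lam : ℕ → ℝ) : Prop :=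
  ∀ ε > 0, ∃ C > 0, ∀ τ j, symbNorm Q d lam τ j ≠ 0 →
    symbNorm Q d lam τ j ≥ C * Real.exp (-ε * wgt m n σ μ τ j)

/-- Global hypoellipticity at the Fourier coefficient level. -/
def GloballyHypoelliptic (m n ℓ : ℕ) (σ μ : ℝ) (Q : Fin ℓ → MvPolynomial (Fin m) ℂ)
    (d : Fin ℓ → ℂ) (lam : ℕ → ℝ) : Prop :=
  ∀ u : (Fin m → ℤ) → ℕ → ℂ, GSGrowth m n σ μ u →
    (∀ r : Fin ℓ, GSDecay m n σ μ (fun τ j => symb Q d lam r τ j * u τ j)) →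
    GSDecay m n σ μ u

/-- Admissible families (compatibility conditions). -/
def Admissible {m ℓ : ℕ} (Q : Fin ℓ → MvPolynomial (Fin m) ℂ) (d : Fin ℓ → ℂ)
    (lam : ℕ → ℝ) (f : Fin ℓ → (Fin m → ℤ) → ℕ → ℂ) : Prop :=
  (∀ r s τ j, symb Q d lam r τ j * f s τ j = symb Q d lam s τ j * f r τ j) ∧
  (∀ r τ j, symb Q d lam r τ j = 0 → f r τ j = 0)

/-- Global solvability at the Fourier coefficient level. -/
def GloballySolvable (m n ℓ : ℕ) (σ μ : ℝ) (Q : Fin ℓ → MvPolynomial (Fin m) ℂ)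
    (d : Fin ℓ → ℂ) (lam : ℕ → ℝ) : Prop :=
  ∀ f : Fin ℓ → (Fin m → ℤ) → ℕ → ℂ, Admissible Q d lam f →
    (∀ r, GSGrowth m n σ μ (f r)) →
    ∃ u : (Fin m → ℤ) → ℕ → ℂ, GSGrowth m n σ μ u ∧
      ∀ r τ j, symb Q d lam r τ j * u τ j = f r τ j

lemma eNormZ_nonneg {m : ℕ} (τ : Fin m → ℤ) : 0 ≤ eNormZ τ := Real.sqrt_nonneg _

lemma wgt_nonneg (m n : ℕ) (σ μ : ℝ) (τ : Fin m → ℤ) (j : ℕ) :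
    0 ≤ wgt m n σ μ τ j :=
  add_nonneg (Real.rpow_nonneg (eNormZ_nonneg τ) _) (Real.rpow_nonneg (Nat.cast_nonneg j) _)

lemma abs_le_eNormZ {m : ℕ} (τ : Fin m → ℤ) (i : Fin m) : |(τ i : ℝ)| ≤ eNormZ τ := by
  rw [← Real.sqrt_sq_eq_abs]
  exact Real.sqrt_le_sqrt (Finset.single_le_sum (fun i _ => sq_nonneg ((τ i : ℝ)))
    (Finset.mem_univ i))

lemma rpow_inv_le {x W e : ℝ} (hx : 0 ≤ x) (he : 0 < e) (h : x ^ (1 / e) ≤ W) :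
    x ≤ W ^ e := by
  have h2 := Real.rpow_le_rpow (Real.rpow_nonneg hx _) h he.le
  rwa [← Real.rpow_mul hx, one_div_mul_cancel he.ne', Real.rpow_one] at h2

lemma finite_wgt_le (m n : ℕ) (σ μ : ℝ) (hn : 1 ≤ n) (hσ : 1 ≤ σ) (hμ : 1 / 2 ≤ μ)
    (W : ℝ) : {p : (Fin m → ℤ) × ℕ | wgt m n σ μ p.1 p.2 ≤ W}.Finite := by
  rcases lt_or_ge W 0 with hW | hW
  · convert Set.finite_empty
    ext p
    simp only [Set.mem_setOf_eq, Set.mem_empty_iff_false, iff_false, not_le]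
    exact lt_of_lt_of_le hW (wgt_nonneg _ _ _ _ _ _)
  · have hσ0 : (0:ℝ) < σ := lt_of_lt_of_le one_pos hσ
    have hn0 : (0:ℝ) < (n:ℝ) := by exact_mod_cast hn
    have hμ0 : (0:ℝ) < μ := lt_of_lt_of_le (by norm_num) hμ
    have he0 : (0:ℝ) < 2 * n * μ := by positivity
    set B : ℤ := ⌈W ^ σ⌉ with hB
    set N : ℕ := ⌈W ^ (2 * (n:ℝ) * μ)⌉₊ with hN
    apply Set.Finite.subset
      (((Set.Finite.pi (fun _ : Fin m => Set.finite_Icc (-B) B)).prod (Set.finite_Iic N)))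
    rintro ⟨τ, j⟩ hp
    simp only [Set.mem_setOf_eq] at hp
    have h1 : eNormZ τ ^ (1 / σ) ≤ W := by
      have := Real.rpow_nonneg (Nat.cast_nonneg j) (1 / (2 * (n:ℝ) * μ))
      unfold wgt at hp; linarith
    have h2 : ((j:ℝ)) ^ (1 / (2 * (n:ℝ) * μ)) ≤ W := by
      have := Real.rpow_nonneg (eNormZ_nonneg τ) (1 / σ)
      unfold wgt at hp; linarith
    have hτ : eNormZ τ ≤ W ^ σ := rpow_inv_le (eNormZ_nonneg τ) hσ0 h1
    have hj : (j:ℝ) ≤ W ^ (2 * (n:ℝ) * μ) := rpow_inv_le (Nat.cast_nonneg j) he0 h2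
    constructor
    · intro i _
      have habs : |(τ i : ℝ)| ≤ (B:ℝ) :=
        le_trans (le_trans (abs_le_eNormZ τ i) hτ) (Int.le_ceil _)
      rw [abs_le] at habs
      constructor
      · exact_mod_cast habs.1
      · exact_mod_cast habs.2
    · have : (j:ℝ) ≤ (N:ℝ) := le_trans hj (Nat.le_ceil _)
      exact_mod_cast this

lemma symbNorm_nonneg {m ℓ : ℕ} (Q : Fin ℓ → MvPolynomial (Fin m) ℂ)
    (d : Fin ℓ → ℂ) (lam : ℕ → ℝ) (τ : Fin m → ℤ) (j : ℕ) :
    0 ≤ symbNorm Q d lam τ j :=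
  Real.iSup_nonneg (fun r => norm_nonneg _)

lemma symb_le_symbNorm {m ℓ : ℕ} (Q : Fin ℓ → MvPolynomial (Fin m) ℂ)
    (d : Fin ℓ → ℂ) (lam : ℕ → ℝ) (r : Fin ℓ) (τ : Fin m → ℤ) (j : ℕ) :
    ‖symb Q d lam r τ j‖ ≤ symbNorm Q d lam τ j := by
  unfold symbNorm
  exact le_ciSup (f := fun r => ‖symb Q d lam r τ j‖)
    (Set.Finite.bddAbove (Set.finite_range _)) r

lemma exists_pos_lb (m n ℓ : ℕ) (σ μ : ℝ) (hn : 1 ≤ n) (hσ : 1 ≤ σ) (hμ : 1 / 2 ≤ μ)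
    (Q : Fin ℓ → MvPolynomial (Fin m) ℂ) (d : Fin ℓ → ℂ) (lam : ℕ → ℝ) (W : ℝ) :
    ∃ c > 0, ∀ τ j, wgt m n σ μ τ j ≤ W → symbNorm Q d lam τ j ≠ 0 →
      c ≤ symbNorm Q d lam τ j := by
  classical
  have hfin : {p : (Fin m → ℤ) × ℕ | wgt m n σ μ p.1 p.2 ≤ W ∧
      symbNorm Q d lam p.1 p.2 ≠ 0}.Finite :=
    (finite_wgt_le m n σ μ hn hσ hμ W).subset (fun p hp => hp.1)
  set S := hfin.toFinset with hS
  rcases S.eq_empty_or_nonempty with hSe | hSne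
  · refine ⟨1, one_pos, fun τ j hw hne => ?_⟩
    exfalso
    have : (τ, j) ∈ S := by simp [hS, Set.Finite.mem_toFinset]; exact ⟨hw, hne⟩
    rw [hSe] at this; exact absurd this (Finset.notMem_empty _)
  · set c := S.inf' hSne (fun p => symbNorm Q d lam p.1 p.2) with hc
    refine ⟨c, ?_, fun τ j hw hne => ?_⟩
    · refine (Finset.lt_inf'_iff hSne).mpr (fun p hp => ?_)
      simp only [hS, Set.Finite.mem_toFinset, Set.mem_setOf_eq] at hp
      exact lt_of_le_of_ne (symbNorm_nonneg Q d lam p.1 p.2) (Ne.symm hp.2)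
    · have hmem : (τ, j) ∈ S := by
        simp only [hS, Set.Finite.mem_toFinset, Set.mem_setOf_eq]; exact ⟨hw, hne⟩
      exact Finset.inf'_le _ hmem

/-- global hypoellipticity implies the Diophantine condition (DC). -/
theorem statement4 (m n ℓ : ℕ) (hm : 1 ≤ m) (hn : 1 ≤ n) (hℓ : 1 ≤ ℓ)
    (σ μ : ℝ) (hσ : 1 ≤ σ) (hμ : 1 / 2 ≤ μ)
    (Q : Fin ℓ → MvPolynomial (Fin m) ℂ) (d : Fin ℓ → ℂ) (lam : ℕ → ℝ)
    (hGH : GloballyHypoelliptic m n ℓ σ μ Q d lam) :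
    ∀ ε > 0, ∃ C > 0, ∀ τ j, symbNorm Q d lam τ j ≠ 0 →
      symbNorm Q d lam τ j ≥ C * Real.exp (-ε * wgt m n σ μ τ j) := by
  classical
  intro ε hε
  by_contra hcon
  push_neg at hcon
  -- For each k, find a point with large weight and tiny nonzero symbol norm.
  have hsel : ∀ k : ℕ, ∃ p : (Fin m → ℤ) × ℕ, symbNorm Q d lam p.1 p.2 ≠ 0 ∧
      symbNorm Q d lam p.1 p.2 ≤ Real.exp (-ε * wgt m n σ μ p.1 p.2) ∧
      (k : ℝ) < wgt m n σ μ p.1 p.2 := by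
    intro k
    obtain ⟨c, hc, hlb⟩ := exists_pos_lb m n ℓ σ μ hn hσ hμ Q d lam (k : ℝ)
    obtain ⟨τ, j, hne, hlt⟩ := hcon (min c 1) (lt_min hc one_pos)
    refine ⟨(τ, j), hne, ?_, ?_⟩
    · calc symbNorm Q d lam τ j ≤ min c 1 * Real.exp (-ε * wgt m n σ μ τ j) := hlt.le
        _ ≤ 1 * Real.exp (-ε * wgt m n σ μ τ j) := by
            apply mul_le_mul_of_nonneg_right (min_le_right _ _) (Real.exp_nonneg _)
        _ = Real.exp (-ε * wgt m n σ μ τ j) := one_mul _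
    · by_contra hle
      push_neg at hle
      have h1 : c ≤ symbNorm Q d lam τ j := hlb τ j hle hne
      have h2 : Real.exp (-ε * wgt m n σ μ τ j) ≤ 1 := by
        rw [Real.exp_le_one_iff]
        have := wgt_nonneg m n σ μ τ j
        nlinarith
      nlinarith [min_le_left c 1, Real.exp_nonneg (-ε * wgt m n σ μ τ j),
        mul_le_mul_of_nonneg_left h2 (le_of_lt (lt_min hc one_pos))]
  choose q hq1 hq2 hq3 using hsel
  -- Build the counterexample sequence u.
  set u : (Fin m → ℤ) → ℕ → ℂ := fun τ j => if ∃ k, q k = (τ, j) then 1 else 0 with hu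
  have hg : GSGrowth m n σ μ u := by
    intro δ hδ
    refine ⟨1, one_pos, fun τ j => ?_⟩
    rw [one_mul]
    have h1 : ‖u τ j‖ ≤ 1 := by
      rw [hu]; by_cases h : ∃ k, q k = (τ, j) <;> simp [h]
    exact le_trans h1 (Real.one_le_exp (mul_nonneg hδ.le (wgt_nonneg m n σ μ τ j)))
  have hd : ∀ r : Fin ℓ, GSDecay m n σ μ (fun τ j => symb Q d lam r τ j * u τ j) := by
    intro r
    refine ⟨1, one_pos, ε, hε, fun τ j => ?_⟩
    rw [one_mul]
    show ‖symb Q d lam r τ j * u τ j‖ ≤ Real.exp (-ε * wgt m n σ μ τ j)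
    by_cases h : ∃ k, q k = (τ, j)
    · obtain ⟨k, hk⟩ := h
      have hu1 : u τ j = 1 := by rw [hu]; exact if_pos ⟨k, hk⟩
      rw [hu1, mul_one]
      have h2 := hq2 k
      rw [hk] at h2
      exact le_trans (symb_le_symbNorm Q d lam r τ j) h2
    · have hu0 : u τ j = 0 := by rw [hu]; exact if_neg h
      rw [hu0, mul_zero, norm_zero]
      exact Real.exp_nonneg _
  obtain ⟨C, hC, δ, hδ, hb⟩ := hGH u hg hd
  -- Pick k large enough to contradict the decay of u.
  obtain ⟨k, hk⟩ := exists_nat_gt (Real.log C / δ)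
  have hwk : Real.log C / δ < wgt m n σ μ (q k).1 (q k).2 := lt_trans hk (hq3 k)
  have hlog : Real.log C < δ * wgt m n σ μ (q k).1 (q k).2 := by
    rw [div_lt_iff₀ hδ] at hwk; linarith
  have hCe : C < Real.exp (δ * wgt m n σ μ (q k).1 (q k).2) :=
    (Real.log_lt_iff_lt_exp hC).mp hlog
  have hub := hb (q k).1 (q k).2
  have hu1 : u (q k).1 (q k).2 = 1 := by
    rw [hu]; exact if_pos ⟨k, rfl⟩
  rw [hu1, norm_one] at hub
  have hfin : C * Real.exp (-δ * wgt m n σ μ (q k).1 (q k).2) < 1 := by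
    have h := mul_lt_mul_of_pos_right hCe
      (Real.exp_pos (-δ * wgt m n σ μ (q k).1 (q k).2))
    rwa [← Real.exp_add,
      (by ring : δ * wgt m n σ μ (q k).1 (q k).2 + -δ * wgt m n σ μ (q k).1 (q k).2 = 0),
      Real.exp_zero] at h
  linarith
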